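/- Let ρ be a state on ℂ^d and A = (A_1, …, A_m) a POVM with all elements nonzero that is irreducible (its transition graph is connected). Then the eigenvalue 1 of each of G_S(ρ,A), G_L(ρ,A), G_R(ρ,A) is nondegenerate: μ_1(G_S(ρ,A)) = μ_1(G_L(ρ,A)) = μ_1(G_R(ρ,A)) = 1. -/

import Mathlib

open Matrix
open scoped ComplexOrder

def IsPOVM {d m : ℕ} (A : Fin m → Matrix (Fin d) (Fin d) ℂ) : Prop :=
  (∀ j, (A j).PosSemidef) ∧ ∑ j, A j = 1

/-- Transition graph of a POVM: distinct `j, k` adjacent iff `tr(A_j A_k) ≠ 0`. -/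
def transitionGraph {d m : ℕ} (A : Fin m → Matrix (Fin d) (Fin d) ℂ) :
    SimpleGraph (Fin m) where
  Adj j k := j ≠ k ∧ (A j * A k).trace ≠ 0
  symm := by
    constructor
    intro j k h
    exact ⟨h.1.symm, by rw [Matrix.trace_mul_comm]; exact h.2⟩
  loopless := by constructor; intro j h; exact h.1 rfl

/-- The outcome probabilities `p_j = tr(ρ A_j)` (a real number). -/
noncomputable def pvec {d m : ℕ} (ρ : Matrix (Fin d) (Fin d) ℂ)
    (A : Fin m → Matrix (Fin d) (Fin d) ℂ) (j : Fin m) : ℝ :=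
  ((ρ * A j).trace).re

/-- Gram matrix `G_S(ρ,A)`. -/
noncomputable def GmS {d m : ℕ} (ρ : Matrix (Fin d) (Fin d) ℂ)
    (A : Fin m → Matrix (Fin d) (Fin d) ℂ) : Matrix (Fin m) (Fin m) ℂ :=
  Matrix.of fun j k =>
    ((ρ * (A k * A j)).trace + (ρ * (A j * A k)).trace) /
      (2 * (Real.sqrt (pvec ρ A j * pvec ρ A k) : ℂ))

/-- Gram matrix `G_L(ρ,A)`. -/
noncomputable def GmL {d m : ℕ} (ρ : Matrix (Fin d) (Fin d) ℂ)
    (A : Fin m → Matrix (Fin d) (Fin d) ℂ) : Matrix (Fin m) (Fin m) ℂ :=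
  Matrix.of fun j k =>
    (ρ * (A k * A j)).trace / (Real.sqrt (pvec ρ A j * pvec ρ A k) : ℂ)

/-- Gram matrix `G_R(ρ,A)`. -/
noncomputable def GmR {d m : ℕ} (ρ : Matrix (Fin d) (Fin d) ℂ)
    (A : Fin m → Matrix (Fin d) (Fin d) ℂ) : Matrix (Fin m) (Fin m) ℂ :=
  Matrix.of fun j k =>
    (ρ * (A j * A k)).trace / (Real.sqrt (pvec ρ A j * pvec ρ A k) : ℂ)

/-- `μ_λ(M)`: the multiplicity of `λ` as an eigenvalue of `M`, i.e. `dim ker (M − λ·I)`. -/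
noncomputable def eigMul {m : ℕ} (M : Matrix (Fin m) (Fin m) ℂ) (lam : ℝ) : ℕ :=
  Module.finrank ℂ (LinearMap.ker (Matrix.mulVecLin (M - (lam : ℂ) • 1)))

open scoped MatrixOrder in
lemma Matrix.posSemidef_iff_eq_transpose_mul_self {n : Type*} [Fintype n] [DecidableEq n]
    {A : Matrix n n ℂ} : A.PosSemidef ↔ ∃ B : Matrix n n ℂ, A = Bᴴ * B :=
  ⟨fun h => by
    obtain ⟨B, hB⟩ := CStarAlgebra.nonneg_iff_eq_star_mul_self.mp h.nonneg
    exact ⟨B, hB⟩, fun ⟨B, hB⟩ => hB ▸ Matrix.posSemidef_conjTranspose_mul_self B⟩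

lemma trace_nonneg' {n : ℕ} {M : Matrix (Fin n) (Fin n) ℂ} (hM : M.PosSemidef) : 0 ≤ M.trace := by
  rw [Matrix.trace]
  refine Finset.sum_nonneg fun i _ => ?_
  exact hM.diag_nonneg

lemma trace_mul_nonneg' {n : ℕ} {X Y : Matrix (Fin n) (Fin n) ℂ}
    (hX : X.PosSemidef) (hY : Y.PosSemidef) : 0 ≤ (X * Y).trace := by
  obtain ⟨B, rfl⟩ := Matrix.posSemidef_iff_eq_transpose_mul_self.mp hX
  rw [Matrix.mul_assoc, Matrix.trace_mul_comm]
  exact trace_nonneg' (hY.mul_mul_conjTranspose_same B)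

lemma conj_eq_zero_of_trace {n : ℕ} {ρ : Matrix (Fin n) (Fin n) ℂ} (hρ : ρ.PosDef)
    {C : Matrix (Fin n) (Fin n) ℂ} (h : (ρ * (Cᴴ * C)).trace = 0) : C = 0 := by
  have h1 : (C * ρ * Cᴴ).trace = 0 := by
    rw [← Matrix.mul_assoc, Matrix.trace_mul_cycle] at h
    exact h
  have hdiag : ∀ i, (C * ρ * Cᴴ) i i = star (fun a => star (C i a)) ⬝ᵥ ρ *ᵥ (fun a => star (C i a)) := by
    intro i
    simp only [Matrix.mul_apply, Matrix.conjTranspose_apply, dotProduct, Matrix.mulVec,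
      dotProduct, star_star, Finset.sum_mul, Finset.mul_sum]
    rw [Finset.sum_comm]
    refine Finset.sum_congr rfl fun a _ => Finset.sum_congr rfl fun b _ => by simp only [Pi.star_apply, star_star]; ring
  have hnn : ∀ i ∈ Finset.univ, 0 ≤ (C * ρ * Cᴴ).diag i := by
    intro i _
    rw [Matrix.diag_apply, hdiag i]
    exact hρ.posSemidef.dotProduct_mulVec_nonneg _
  have hzero : ∀ i ∈ (Finset.univ : Finset (Fin n)), (C * ρ * Cᴴ).diag i = 0 := by
    rw [← Finset.sum_eq_zero_iff_of_nonneg hnn]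
    exact h1
  ext i a
  by_contra hCia
  have hx : (fun a => star (C i a)) ≠ 0 := by
    intro h0
    exact hCia (by simpa using congrArg star (congrFun h0 a))
  have := hρ.dotProduct_mulVec_pos hx
  rw [← hdiag i] at this
  have h0 := hzero i (Finset.mem_univ i)
  rw [Matrix.diag_apply] at h0
  simp [h0] at this

lemma psd_eq_zero_of_trace {n : ℕ} {ρ : Matrix (Fin n) (Fin n) ℂ} (hρ : ρ.PosDef)
    {N : Matrix (Fin n) (Fin n) ℂ} (hN : N.PosSemidef) (h : (ρ * N).trace = 0) : N = 0 := by
  obtain ⟨B, rfl⟩ := Matrix.posSemidef_iff_eq_transpose_mul_self.mp hN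
  rw [conj_eq_zero_of_trace hρ h]
  simp

lemma psd_sum {n m : ℕ} {f : Fin m → Matrix (Fin n) (Fin n) ℂ} (s : Finset (Fin m))
    (hf : ∀ j ∈ s, (f j).PosSemidef) : (∑ j ∈ s, f j).PosSemidef := by
  classical
  induction s using Finset.induction_on with
  | empty => simpa using Matrix.PosSemidef.zero
  | insert _ _ hnot ih =>
    rw [Finset.sum_insert hnot]
    exact (hf _ (Finset.mem_insert_self _ _)).add
      (ih fun j hj => hf j (Finset.mem_insert_of_mem hj))

lemma graph_step {n m : ℕ} {A : Fin m → Matrix (Fin n) (Fin n) ℂ}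
    (hpsd : ∀ j, (A j).PosSemidef) (hsum : ∑ j, A j = 1)
    (dv : Fin m → ℂ)
    (hrel : ∀ r, A r * (∑ l, dv l • A l) = dv r • A r)
    {j k : Fin m} (htr : (A j * A k).trace ≠ 0) : dv j = dv k := by
  classical
  by_contra hne
  set M := ∑ l, dv l • A l with hM
  set L : List (Fin m) := (Finset.univ.filter fun l => dv l ≠ dv k).toList with hL
  have memL : ∀ l, l ∈ L ↔ dv l ≠ dv k := by
    intro l
    rw [hL, Finset.mem_toList, Finset.mem_filter]
    simp
  set f : Fin m → Matrix (Fin n) (Fin n) ℂ := fun l => (dv k - dv l)⁻¹ • (M - dv l • 1) with hf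
  set g : Fin m → Fin m → ℂ := fun r l => (dv k - dv l)⁻¹ * (dv r - dv l) with hg
  have claim1 : ∀ (r : Fin m) (t : List (Fin m)),
      A r * (t.map f).prod = (t.map (g r)).prod • A r := by
    intro r t
    induction t with
    | nil => simp
    | cons a t ih =>
      rw [List.map_cons, List.map_cons, List.prod_cons, List.prod_cons, ← Matrix.mul_assoc]
      have h1 : A r * f a = g r a • A r := by
        rw [hf, hg]
        simp only [Matrix.mul_smul, Matrix.mul_sub, hrel r, Matrix.mul_smul, Matrix.mul_one]
        rw [← sub_smul, smul_smul]
      rw [h1, Matrix.smul_mul, ih, smul_smul]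
  set Gm := (L.map f).prod with hGm
  have key : ∀ r, A r * Gm = (if dv r = dv k then (1:ℂ) else 0) • A r := by
    intro r
    rw [hGm, claim1 r L]
    congr 1
    by_cases hr : dv r = dv k
    · rw [if_pos hr]
      apply List.prod_eq_one
      intro x hx
      obtain ⟨l, hl, rfl⟩ := List.mem_map.mp hx
      have hlk : dv l ≠ dv k := (memL l).mp hl
      show (dv k - dv l)⁻¹ * (dv r - dv l) = 1
      rw [hr]
      exact inv_mul_cancel₀ (sub_ne_zero.mpr (Ne.symm hlk))
    · rw [if_neg hr]
      apply List.prod_eq_zero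
      refine List.mem_map.mpr ⟨r, (memL r).mpr hr, ?_⟩
      show (dv k - dv r)⁻¹ * (dv r - dv r) = 0
      simp
  have claim3 : Gm = ∑ r, (if dv r = dv k then (1:ℂ) else 0) • A r := by
    calc Gm = 1 * Gm := (Matrix.one_mul _).symm
    _ = (∑ r, A r) * Gm := by rw [hsum]
    _ = ∑ r, A r * Gm := Finset.sum_mul _ _ _
    _ = ∑ r, (if dv r = dv k then (1:ℂ) else 0) • A r := Finset.sum_congr rfl fun r _ => key r
  have hGsub : Gm - A k = ∑ r ∈ Finset.univ.erase k, (if dv r = dv k then (1:ℂ) else 0) • A r := by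
    rw [claim3, ← Finset.sum_erase_add _ _ (Finset.mem_univ k)]
    simp
  have hGsubPsd : (Gm - A k).PosSemidef := by
    rw [hGsub]
    refine psd_sum _ fun r _ => ?_
    by_cases hr : dv r = dv k
    · rw [if_pos hr, one_smul]; exact hpsd r
    · rw [if_neg hr, zero_smul]; exact Matrix.PosSemidef.zero
  have hAjG : (A j * Gm).trace = 0 := by
    rw [key j, if_neg hne]
    simp
  have h1 : 0 ≤ (A j * (Gm - A k)).trace := trace_mul_nonneg' (hpsd j) hGsubPsd
  rw [Matrix.mul_sub, Matrix.trace_sub, hAjG, zero_sub] at h1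
  have h2 : 0 ≤ (A j * A k).trace := trace_mul_nonneg' (hpsd j) (hpsd k)
  exact htr (le_antisymm (by simpa using neg_nonneg.mp h1) h2)

lemma delta_identity {n m : ℕ} {A : Fin m → Matrix (Fin n) (Fin n) ℂ}
    (hH : ∀ j, (A j)ᴴ = A j) (hsum : ∑ j, A j = 1) (dv : Fin m → ℂ) :
    (∑ j, (star (dv j) * dv j) • A j) - (∑ l, dv l • A l)ᴴ * (∑ l, dv l • A l)
      = ∑ j, (dv j • (1 : Matrix (Fin n) (Fin n) ℂ) - ∑ l, dv l • A l)ᴴ *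
          (A j * (dv j • (1 : Matrix (Fin n) (Fin n) ℂ) - ∑ l, dv l • A l)) := by
  set M := ∑ l, dv l • A l with hM
  have hMH : Mᴴ = ∑ l, star (dv l) • A l := by
    rw [hM, Matrix.conjTranspose_sum]
    exact Finset.sum_congr rfl fun l _ => by rw [Matrix.conjTranspose_smul, hH l]
  have expand : ∀ j, (dv j • (1 : Matrix (Fin n) (Fin n) ℂ) - M)ᴴ * (A j * (dv j • 1 - M))
      = (star (dv j) * dv j) • A j - star (dv j) • (A j * M) - dv j • (Mᴴ * A j)
        + Mᴴ * (A j * M) := by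
    intro j
    simp only [Matrix.conjTranspose_sub, Matrix.conjTranspose_smul, Matrix.conjTranspose_one,
      Matrix.mul_sub, Matrix.sub_mul, Matrix.smul_mul, Matrix.mul_smul, Matrix.one_mul,
      Matrix.mul_one, smul_smul]
    module
  have e1 : Mᴴ * M = ∑ j, star (dv j) • (A j * M) := by
    rw [hMH, Finset.sum_mul]
    exact Finset.sum_congr rfl fun j _ => Matrix.smul_mul _ _ _
  have e2 : Mᴴ * M = ∑ j, dv j • (Mᴴ * A j) := by
    conv_lhs => rw [hM, Matrix.mul_sum]
    exact Finset.sum_congr rfl fun j _ => Matrix.mul_smul _ _ _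
  have e3 : Mᴴ * M = ∑ j, Mᴴ * (A j * M) := by
    rw [← Matrix.mul_sum]
    congr 1
    rw [← Finset.sum_mul, hsum, Matrix.one_mul]
  calc (∑ j, (star (dv j) * dv j) • A j) - Mᴴ * M
      = (∑ j, (star (dv j) * dv j) • A j) - Mᴴ * M - Mᴴ * M + Mᴴ * M := by abel
    _ = ∑ j, ((star (dv j) * dv j) • A j - star (dv j) • (A j * M) - dv j • (Mᴴ * A j)
          + Mᴴ * (A j * M)) := by
        have hd : ∑ j, ((star (dv j) * dv j) • A j - star (dv j) • (A j * M)
              - dv j • (Mᴴ * A j) + Mᴴ * (A j * M))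
            = (∑ j, (star (dv j) * dv j) • A j) - (∑ j, star (dv j) • (A j * M))
              - (∑ j, dv j • (Mᴴ * A j)) + ∑ j, Mᴴ * (A j * M) := by
          rw [Finset.sum_add_distrib, Finset.sum_sub_distrib, Finset.sum_sub_distrib]
        rw [hd, ← e1, ← e2, ← e3]
    _ = ∑ j, (dv j • (1 : Matrix (Fin n) (Fin n) ℂ) - M)ᴴ * (A j * (dv j • 1 - M)) :=
        Finset.sum_congr rfl fun j _ => (expand j).symm

lemma term_psd {n : ℕ} {N : Matrix (Fin n) (Fin n) ℂ} (hN : N.PosSemidef)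
    (D : Matrix (Fin n) (Fin n) ℂ) : (Dᴴ * (N * D)).PosSemidef := by
  obtain ⟨B, rfl⟩ := Matrix.posSemidef_iff_eq_transpose_mul_self.mp hN
  have h : Dᴴ * (Bᴴ * B * D) = (B * D)ᴴ * (B * D) := by
    rw [Matrix.conjTranspose_mul]
    simp only [Matrix.mul_assoc]
  rw [h]
  exact Matrix.posSemidef_conjTranspose_mul_self _

lemma delta_nonneg {n m : ℕ} {ρ : Matrix (Fin n) (Fin n) ℂ} (hρ : ρ.PosSemidef)
    {A : Fin m → Matrix (Fin n) (Fin n) ℂ} (hpsd : ∀ j, (A j).PosSemidef)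
    (hsum : ∑ j, A j = 1) (dv : Fin m → ℂ) :
    0 ≤ (ρ * ((∑ j, (star (dv j) * dv j) • A j)
        - (∑ l, dv l • A l)ᴴ * (∑ l, dv l • A l))).trace := by
  rw [delta_identity (fun j => (hpsd j).1) hsum dv, Matrix.mul_sum, Matrix.trace_sum]
  exact Finset.sum_nonneg fun j _ => trace_mul_nonneg' hρ (term_psd (hpsd j) _)

lemma delta_zero {n m : ℕ} {ρ : Matrix (Fin n) (Fin n) ℂ} (hρ : ρ.PosDef)
    {A : Fin m → Matrix (Fin n) (Fin n) ℂ} (hpsd : ∀ j, (A j).PosSemidef)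
    (hsum : ∑ j, A j = 1) (dv : Fin m → ℂ)
    (h : (ρ * ((∑ j, (star (dv j) * dv j) • A j)
        - (∑ l, dv l • A l)ᴴ * (∑ l, dv l • A l))).trace = 0) :
    ∀ j, A j * (∑ l, dv l • A l) = dv j • A j := by
  rw [delta_identity (fun j => (hpsd j).1) hsum dv, Matrix.mul_sum, Matrix.trace_sum] at h
  have hterm : ∀ j ∈ (Finset.univ : Finset (Fin m)),
      (ρ * ((dv j • (1 : Matrix (Fin n) (Fin n) ℂ) - ∑ l, dv l • A l)ᴴ *
        (A j * (dv j • (1 : Matrix (Fin n) (Fin n) ℂ) - ∑ l, dv l • A l)))).trace = 0 := by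
    rw [← Finset.sum_eq_zero_iff_of_nonneg
      (fun j _ => trace_mul_nonneg' hρ.posSemidef (term_psd (hpsd j) _))]
    exact h
  intro j
  have hz := psd_eq_zero_of_trace hρ (term_psd (hpsd j) _) (hterm j (Finset.mem_univ j))
  set D := dv j • (1 : Matrix (Fin n) (Fin n) ℂ) - ∑ l, dv l • A l with hD
  obtain ⟨B, hB⟩ := Matrix.posSemidef_iff_eq_transpose_mul_self.mp (hpsd j)
  have hBD : B * D = 0 := by
    have h2 : (B * D)ᴴ * (B * D) = Dᴴ * (A j * D) := by
      rw [hB, Matrix.conjTranspose_mul]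
      simp only [Matrix.mul_assoc]
    rw [← Matrix.conjTranspose_mul_self_eq_zero, h2, hz]
  have hAD : A j * D = 0 := by
    rw [hB, Matrix.mul_assoc, hBD, Matrix.mul_zero]
  have : A j * D = dv j • A j - A j * (∑ l, dv l • A l) := by
    rw [hD, Matrix.mul_sub, Matrix.mul_smul, Matrix.mul_one]
  rw [this] at hAD
  linear_combination (norm := abel) -hAD

lemma conjT_sum_smul {n m : ℕ} {A : Fin m → Matrix (Fin n) (Fin n) ℂ}
    (hH : ∀ j, (A j)ᴴ = A j) (dv : Fin m → ℂ) :
    (∑ l, dv l • A l)ᴴ = ∑ l, star (dv l) • A l := by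
  rw [Matrix.conjTranspose_sum]
  exact Finset.sum_congr rfl fun l _ => by rw [Matrix.conjTranspose_smul, hH l]

lemma sumTraceGen {n m : ℕ} (ρ X : Matrix (Fin n) (Fin n) ℂ)
    (A : Fin m → Matrix (Fin n) (Fin n) ℂ) (e : Fin m → ℂ) :
    ∑ k, e k * (ρ * (X * A k)).trace = (ρ * (X * ∑ k, e k • A k)).trace := by
  rw [Matrix.mul_sum, Matrix.mul_sum, Matrix.trace_sum]
  exact Finset.sum_congr rfl fun k _ => by
    rw [Matrix.mul_smul, Matrix.mul_smul, Matrix.trace_smul, smul_eq_mul]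

lemma sumTraceGen' {n m : ℕ} (ρ X : Matrix (Fin n) (Fin n) ℂ)
    (A : Fin m → Matrix (Fin n) (Fin n) ℂ) (e : Fin m → ℂ) :
    ∑ k, e k * (ρ * (A k * X)).trace = (ρ * ((∑ k, e k • A k) * X)).trace := by
  rw [Finset.sum_mul, Matrix.mul_sum, Matrix.trace_sum]
  exact Finset.sum_congr rfl fun k _ => by
    rw [Matrix.smul_mul, Matrix.mul_smul, Matrix.trace_smul, smul_eq_mul]

lemma sumTraceS {n m : ℕ} (ρ : Matrix (Fin n) (Fin n) ℂ)
    (A : Fin m → Matrix (Fin n) (Fin n) ℂ) (e : Fin m → ℂ) :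
    ∑ k, e k * (ρ * A k).trace = (ρ * ∑ k, e k • A k).trace := by
  rw [Matrix.mul_sum, Matrix.trace_sum]
  exact Finset.sum_congr rfl fun k _ => by
    rw [Matrix.mul_smul, Matrix.trace_smul, smul_eq_mul]

lemma const_of_preconnected {m : ℕ} {G : SimpleGraph (Fin m)} (h : G.Preconnected)
    {f : Fin m → ℂ} (hadj : ∀ a b, G.Adj a b → f a = f b) : ∀ j k, f j = f k := by
  intro j k
  obtain ⟨w⟩ := h j k
  induction w with
  | nil => rfl
  | cons h' p ih => exact (hadj _ _ h').trans ih

lemma const_of_delta {n m : ℕ} {ρ : Matrix (Fin n) (Fin n) ℂ} (hρ : ρ.PosDef)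
    {A : Fin m → Matrix (Fin n) (Fin n) ℂ} (hpsd : ∀ j, (A j).PosSemidef)
    (hsum : ∑ j, A j = 1) (hconn : (transitionGraph A).Preconnected) (dv : Fin m → ℂ)
    (h : (ρ * ((∑ j, (star (dv j) * dv j) • A j)
        - (∑ l, dv l • A l)ᴴ * (∑ l, dv l • A l))).trace = 0) : ∀ j k, dv j = dv k := by
  have hrel := delta_zero hρ hpsd hsum dv h
  exact const_of_preconnected hconn
    (fun a b hab => graph_step hpsd hsum dv hrel hab.2)

lemma eigMul_one_eq_one {m : ℕ} (G : Matrix (Fin m) (Fin m) ℂ) (u : Fin m → ℂ) (hu : u ≠ 0)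
    (hGu : G *ᵥ u = u) (hker : ∀ x, G *ᵥ x = x → ∃ γ : ℂ, x = γ • u) :
    eigMul G 1 = 1 := by
  have hsub : ∀ x, (G - ((1:ℝ) : ℂ) • 1) *ᵥ x = G *ᵥ x - x := by
    intro x
    rw [Matrix.sub_mulVec]
    congr 1
    rw [Complex.ofReal_one, one_smul, Matrix.one_mulVec]
  have hkerEq : LinearMap.ker (Matrix.mulVecLin (G - ((1:ℝ) : ℂ) • 1)) = ℂ ∙ u := by
    ext x
    rw [LinearMap.mem_ker, Matrix.mulVecLin_apply, Submodule.mem_span_singleton, hsub,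
      sub_eq_zero]
    constructor
    · intro hx
      obtain ⟨γ, hγ⟩ := hker x hx
      exact ⟨γ, hγ.symm⟩
    · rintro ⟨γ, rfl⟩
      rw [Matrix.mulVec_smul, hGu]
  rw [eigMul, hkerEq]
  exact finrank_span_singleton hu

lemma const_of_traceL {n m : ℕ} {ρ : Matrix (Fin n) (Fin n) ℂ} (hρ : ρ.PosDef)
    {A : Fin m → Matrix (Fin n) (Fin n) ℂ} (hpsd : ∀ j, (A j).PosSemidef)
    (hsum : ∑ j, A j = 1) (hconn : (transitionGraph A).Preconnected) (c : Fin m → ℂ)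
    (hec : ∀ j, (ρ * ((∑ k, c k • A k) * A j)).trace = c j * (ρ * A j).trace) :
    ∀ j k, c j = c k := by
  have hH : ∀ j, (A j)ᴴ = A j := fun j => (hpsd j).1
  have h2 : (ρ * ((∑ k, c k • A k) * (∑ l, star (c l) • A l))).trace
      = (ρ * ∑ l, (star (c l) * c l) • A l).trace := by
    rw [← sumTraceGen ρ _ A (fun l => star (c l)), ← sumTraceS ρ A (fun l => star (c l) * c l)]
    refine Finset.sum_congr rfl fun l _ => ?_
    rw [hec l]
    ring
  have hΔ : (ρ * ((∑ j, (star ((fun l => star (c l)) j) * (fun l => star (c l)) j) • A j)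
      - (∑ l, (fun l => star (c l)) l • A l)ᴴ
        * (∑ l, (fun l => star (c l)) l • A l))).trace = 0 := by
    rw [conjT_sum_smul hH]
    simp only [star_star]
    have e5 : (∑ j, (c j * star (c j)) • A j) = ∑ l, (star (c l) * c l) • A l :=
      Finset.sum_congr rfl fun l _ => by rw [mul_comm]
    rw [e5, Matrix.mul_sub, Matrix.trace_sub, h2, sub_self]
  have hconst := const_of_delta hρ hpsd hsum hconn (fun l => star (c l)) hΔ
  exact fun j k => star_injective (hconst j k)

lemma const_of_traceR {n m : ℕ} {ρ : Matrix (Fin n) (Fin n) ℂ} (hρ : ρ.PosDef)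
    {A : Fin m → Matrix (Fin n) (Fin n) ℂ} (hpsd : ∀ j, (A j).PosSemidef)
    (hsum : ∑ j, A j = 1) (hconn : (transitionGraph A).Preconnected) (c : Fin m → ℂ)
    (hec : ∀ j, (ρ * (A j * ∑ k, c k • A k)).trace = c j * (ρ * A j).trace) :
    ∀ j k, c j = c k := by
  have hH : ∀ j, (A j)ᴴ = A j := fun j => (hpsd j).1
  have h2 : (ρ * ((∑ l, star (c l) • A l) * (∑ k, c k • A k))).trace
      = (ρ * ∑ l, (star (c l) * c l) • A l).trace := by
    rw [← sumTraceGen' ρ _ A (fun l => star (c l)), ← sumTraceS ρ A (fun l => star (c l) * c l)]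
    refine Finset.sum_congr rfl fun l _ => ?_
    rw [hec l]
    ring
  have hΔ : (ρ * ((∑ j, (star (c j) * c j) • A j)
      - (∑ l, c l • A l)ᴴ * (∑ l, c l • A l))).trace = 0 := by
    rw [conjT_sum_smul hH]
    rw [Matrix.mul_sub, Matrix.trace_sub, h2, sub_self]
  exact const_of_delta hρ hpsd hsum hconn c hΔ

lemma const_of_traceS {n m : ℕ} {ρ : Matrix (Fin n) (Fin n) ℂ} (hρ : ρ.PosDef)
    {A : Fin m → Matrix (Fin n) (Fin n) ℂ} (hpsd : ∀ j, (A j).PosSemidef)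
    (hsum : ∑ j, A j = 1) (hconn : (transitionGraph A).Preconnected) (c : Fin m → ℂ)
    (hec : ∀ j, (ρ * ((∑ k, c k • A k) * A j)).trace + (ρ * (A j * ∑ k, c k • A k)).trace
      = 2 * (c j * (ρ * A j).trace)) :
    ∀ j k, c j = c k := by
  have hH : ∀ j, (A j)ᴴ = A j := fun j => (hpsd j).1
  have h2 : (ρ * ((∑ k, c k • A k) * (∑ l, star (c l) • A l))).trace
      + (ρ * ((∑ l, star (c l) • A l) * (∑ k, c k • A k))).trace
      = 2 * (ρ * ∑ l, (star (c l) * c l) • A l).trace := by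
    rw [← sumTraceGen ρ _ A (fun l => star (c l)), ← sumTraceGen' ρ _ A (fun l => star (c l)),
      ← sumTraceS ρ A (fun l => star (c l) * c l), ← Finset.sum_add_distrib,
      Finset.mul_sum]
    refine Finset.sum_congr rfl fun l _ => ?_
    rw [← mul_add, hec l]
    ring
  have e1 : (ρ * ((∑ j, (star ((fun l => star (c l)) j) * (fun l => star (c l)) j) • A j)
      - (∑ l, (fun l => star (c l)) l • A l)ᴴ
        * (∑ l, (fun l => star (c l)) l • A l))).trace
      = (ρ * ∑ l, (star (c l) * c l) • A l).trace
        - (ρ * ((∑ k, c k • A k) * (∑ l, star (c l) • A l))).trace := by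
    rw [conjT_sum_smul hH]
    simp only [star_star]
    have e5 : (∑ j, (c j * star (c j)) • A j) = ∑ l, (star (c l) * c l) • A l :=
      Finset.sum_congr rfl fun l _ => by rw [mul_comm]
    rw [e5, Matrix.mul_sub, Matrix.trace_sub]
  have e2 : (ρ * ((∑ j, (star (c j) * c j) • A j)
      - (∑ l, c l • A l)ᴴ * (∑ l, c l • A l))).trace
      = (ρ * ∑ l, (star (c l) * c l) • A l).trace
        - (ρ * ((∑ l, star (c l) • A l) * (∑ k, c k • A k))).trace := by
    rw [conjT_sum_smul hH]
    rw [Matrix.mul_sub, Matrix.trace_sub]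
  have hn1 := delta_nonneg hρ.posSemidef hpsd hsum (fun l => star (c l))
  have hn2 := delta_nonneg hρ.posSemidef hpsd hsum c
  rw [e1] at hn1
  rw [e2] at hn2
  have hsum0 : ((ρ * ∑ l, (star (c l) * c l) • A l).trace
        - (ρ * ((∑ k, c k • A k) * (∑ l, star (c l) • A l))).trace)
      + ((ρ * ∑ l, (star (c l) * c l) • A l).trace
        - (ρ * ((∑ l, star (c l) • A l) * (∑ k, c k • A k))).trace) = 0 := by
    linear_combination -h2
  have hz1 : (ρ * ∑ l, (star (c l) * c l) • A l).trace
      - (ρ * ((∑ k, c k • A k) * (∑ l, star (c l) • A l))).trace = 0 := by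
    refine le_antisymm ?_ hn1
    calc (ρ * ∑ l, (star (c l) * c l) • A l).trace
        - (ρ * ((∑ k, c k • A k) * (∑ l, star (c l) • A l))).trace
        ≤ ((ρ * ∑ l, (star (c l) * c l) • A l).trace
        - (ρ * ((∑ k, c k • A k) * (∑ l, star (c l) • A l))).trace)
        + ((ρ * ∑ l, (star (c l) * c l) • A l).trace
        - (ρ * ((∑ l, star (c l) • A l) * (∑ k, c k • A k))).trace) :=
          le_add_of_nonneg_right hn2
      _ = 0 := hsum0
  have hΔ : (ρ * ((∑ j, (star ((fun l => star (c l)) j) * (fun l => star (c l)) j) • A j)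
      - (∑ l, (fun l => star (c l)) l • A l)ᴴ
        * (∑ l, (fun l => star (c l)) l • A l))).trace = 0 := by
    rw [e1, hz1]
  have hconst := const_of_delta hρ hpsd hsum hconn (fun l => star (c l)) hΔ
  exact fun j k => star_injective (hconst j k)

/-- For an irreducible POVM, the eigenvalue `1` of `G_S`, `G_L`, `G_R` is
nondegenerate. -/
theorem stmt_11 {d m : ℕ}
    (ρ : Matrix (Fin d) (Fin d) ℂ) (hρ : ρ.PosDef) (hρtr : ρ.trace = 1)
    (A : Fin m → Matrix (Fin d) (Fin d) ℂ)
    (hA : IsPOVM A) (hA0 : ∀ j, A j ≠ 0)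
    (hirr : (transitionGraph A).Connected) :
    eigMul (GmS ρ A) 1 = 1 ∧ eigMul (GmL ρ A) 1 = 1 ∧ eigMul (GmR ρ A) 1 = 1 := by
  classical
  obtain ⟨hpsd, hsum⟩ := hA
  have hprec := hirr.preconnected
  have hne : Nonempty (Fin m) := hirr.nonempty
  obtain ⟨j0⟩ := hne
  have htrne : ∀ j, (ρ * A j).trace ≠ 0 := fun j h =>
    hA0 j (psd_eq_zero_of_trace hρ (hpsd j) h)
  have htr0 : ∀ j, 0 ≤ (ρ * A j).trace := fun j =>
    trace_mul_nonneg' hρ.posSemidef (hpsd j)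
  have hptr : ∀ j, (ρ * A j).trace = ((pvec ρ A j : ℝ) : ℂ) := by
    intro j
    have h := (Complex.le_def.mp (htr0 j)).2
    apply Complex.ext
    · simp [pvec]
    · simp [← h]
  have hpv : ∀ j, 0 < pvec ρ A j := by
    intro j
    have hnz : pvec ρ A j ≠ 0 := by
      intro h0
      apply htrne j
      rw [hptr j, h0, Complex.ofReal_zero]
    have hle : 0 ≤ pvec ρ A j := by
      simpa [pvec] using (Complex.le_def.mp (htr0 j)).1
    exact lt_of_le_of_ne hle (Ne.symm hnz)
  set u : Fin m → ℂ := fun j => ((Real.sqrt (pvec ρ A j) : ℝ) : ℂ) with hudef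
  have hu0 : ∀ j, u j ≠ 0 := by
    intro j
    rw [hudef]
    simp only [ne_eq, Complex.ofReal_eq_zero]
    exact Real.sqrt_ne_zero'.mpr (hpv j) ∘ id
  have huu : ∀ j, u j * u j = ((pvec ρ A j : ℝ) : ℂ) := by
    intro j
    rw [hudef, ← Complex.ofReal_mul, Real.mul_self_sqrt (hpv j).le]
  have hsqrt : ∀ j k, ((Real.sqrt (pvec ρ A j * pvec ρ A k) : ℝ) : ℂ) = u j * u k := by
    intro j k
    rw [Real.sqrt_mul (hpv j).le, Complex.ofReal_mul]
  have hune : u ≠ 0 := fun h => hu0 j0 (congrFun h j0)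
  have hmv : ∀ (G : Matrix (Fin m) (Fin m) ℂ) (v : Fin m → ℂ) (j : Fin m),
      (G *ᵥ v) j = ∑ k, G j k * v k := fun G v j => rfl
  have entL : ∀ j k, GmL ρ A j k = (ρ * (A k * A j)).trace / (u j * u k) := by
    intro j k
    simp only [GmL, Matrix.of_apply]
    rw [hsqrt j k]
  have entR : ∀ j k, GmR ρ A j k = (ρ * (A j * A k)).trace / (u j * u k) := by
    intro j k
    simp only [GmR, Matrix.of_apply]
    rw [hsqrt j k]
  have entS : ∀ j k, GmS ρ A j k
      = ((ρ * (A k * A j)).trace + (ρ * (A j * A k)).trace) / (2 * (u j * u k)) := by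
    intro j k
    simp only [GmS, Matrix.of_apply]
    rw [hsqrt j k]
  have hsumA : ∀ j, ∑ k, (ρ * (A k * A j)).trace = (ρ * A j).trace := by
    intro j
    have h := sumTraceGen' ρ (A j) A (fun _ => (1:ℂ))
    simp only [one_mul, one_smul] at h
    rw [h, hsum, Matrix.one_mul]
  have hsumA' : ∀ j, ∑ k, (ρ * (A j * A k)).trace = (ρ * A j).trace := by
    intro j
    have h := sumTraceGen ρ (A j) A (fun _ => (1:ℂ))
    simp only [one_mul, one_smul] at h
    rw [h, hsum, Matrix.mul_one]
  -- eigenvector u for each Gram matrix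
  have hGuL : GmL ρ A *ᵥ u = u := by
    funext j
    have hterm : ∀ k, GmL ρ A j k * u k = (ρ * (A k * A j)).trace / u j := by
      intro k
      rw [entL j k, ← div_div]
      exact div_mul_cancel₀ _ (hu0 k)
    rw [hmv, Finset.sum_congr rfl (fun k _ => hterm k), ← Finset.sum_div, hsumA j, hptr j,
      ← huu j]
    exact mul_div_cancel_right₀ (u j) (hu0 j)
  have hGuR : GmR ρ A *ᵥ u = u := by
    funext j
    have hterm : ∀ k, GmR ρ A j k * u k = (ρ * (A j * A k)).trace / u j := by
      intro k
      rw [entR j k, ← div_div]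
      exact div_mul_cancel₀ _ (hu0 k)
    rw [hmv, Finset.sum_congr rfl (fun k _ => hterm k), ← Finset.sum_div, hsumA' j, hptr j,
      ← huu j]
    exact mul_div_cancel_right₀ (u j) (hu0 j)
  have hGuS : GmS ρ A *ᵥ u = u := by
    funext j
    have hterm : ∀ k, GmS ρ A j k * u k
        = ((ρ * (A k * A j)).trace + (ρ * (A j * A k)).trace) / (2 * u j) := by
      intro k
      rw [entS j k, show (2:ℂ) * (u j * u k) = 2 * u j * u k from by ring, ← div_div]
      exact div_mul_cancel₀ _ (hu0 k)
    have h2u : (2 : ℂ) * u j ≠ 0 := mul_ne_zero two_ne_zero (hu0 j)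
    rw [hmv, Finset.sum_congr rfl (fun k _ => hterm k), ← Finset.sum_div,
      Finset.sum_add_distrib, hsumA j, hsumA' j, hptr j, ← huu j, div_eq_iff h2u]
    ring
  -- kernel characterizations
  have hkerL : ∀ x, GmL ρ A *ᵥ x = x → ∃ γ : ℂ, x = γ • u := by
    intro x hx
    have hxc : ∀ k, x k = (x k / u k) * u k := fun k => (div_mul_cancel₀ (x k) (hu0 k)).symm
    have hec : ∀ j, (ρ * ((∑ k, (x k / u k) • A k) * A j)).trace
        = (x j / u j) * (ρ * A j).trace := by
      intro j
      have hj : ∑ k, GmL ρ A j k * x k = x j := by rw [← hmv, hx]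
      have hterm : ∀ k, GmL ρ A j k * x k
          = (x k / u k) * (ρ * (A k * A j)).trace / u j := by
        intro k
        rw [entL j k, div_mul_eq_mul_div, div_mul_eq_mul_div, div_div,
          div_eq_div_iff (mul_ne_zero (hu0 j) (hu0 k)) (mul_ne_zero (hu0 k) (hu0 j))]
        ring
      rw [Finset.sum_congr rfl (fun k _ => hterm k), ← Finset.sum_div, hxc j,
        div_eq_iff (hu0 j), sumTraceGen' ρ (A j) A (fun k => x k / u k)] at hj
      rw [hj, mul_assoc, huu j, ← hptr j]
    have hcc := const_of_traceL hρ hpsd hsum hprec (fun k => x k / u k) hec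
    refine ⟨x j0 / u j0, funext fun j => ?_⟩
    have h' : x j / u j = x j0 / u j0 := hcc j j0
    rw [Pi.smul_apply, smul_eq_mul, hxc j, h']
  have hkerR : ∀ x, GmR ρ A *ᵥ x = x → ∃ γ : ℂ, x = γ • u := by
    intro x hx
    have hxc : ∀ k, x k = (x k / u k) * u k := fun k => (div_mul_cancel₀ (x k) (hu0 k)).symm
    have hec : ∀ j, (ρ * (A j * ∑ k, (x k / u k) • A k)).trace
        = (x j / u j) * (ρ * A j).trace := by
      intro j
      have hj : ∑ k, GmR ρ A j k * x k = x j := by rw [← hmv, hx]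
      have hterm : ∀ k, GmR ρ A j k * x k
          = (x k / u k) * (ρ * (A j * A k)).trace / u j := by
        intro k
        rw [entR j k, div_mul_eq_mul_div, div_mul_eq_mul_div, div_div,
          div_eq_div_iff (mul_ne_zero (hu0 j) (hu0 k)) (mul_ne_zero (hu0 k) (hu0 j))]
        ring
      rw [Finset.sum_congr rfl (fun k _ => hterm k), ← Finset.sum_div, hxc j,
        div_eq_iff (hu0 j), sumTraceGen ρ (A j) A (fun k => x k / u k)] at hj
      rw [hj, mul_assoc, huu j, ← hptr j]
    have hcc := const_of_traceR hρ hpsd hsum hprec (fun k => x k / u k) hec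
    refine ⟨x j0 / u j0, funext fun j => ?_⟩
    have h' : x j / u j = x j0 / u j0 := hcc j j0
    rw [Pi.smul_apply, smul_eq_mul, hxc j, h']
  have hkerS : ∀ x, GmS ρ A *ᵥ x = x → ∃ γ : ℂ, x = γ • u := by
    intro x hx
    have hxc : ∀ k, x k = (x k / u k) * u k := fun k => (div_mul_cancel₀ (x k) (hu0 k)).symm
    have hec : ∀ j, (ρ * ((∑ k, (x k / u k) • A k) * A j)).trace
        + (ρ * (A j * ∑ k, (x k / u k) • A k)).trace
        = 2 * ((x j / u j) * (ρ * A j).trace) := by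
      intro j
      have h2u : (2 : ℂ) * u j ≠ 0 := mul_ne_zero two_ne_zero (hu0 j)
      have hj : ∑ k, GmS ρ A j k * x k = x j := by rw [← hmv, hx]
      have hterm : ∀ k, GmS ρ A j k * x k
          = (x k / u k) * ((ρ * (A k * A j)).trace + (ρ * (A j * A k)).trace) / (2 * u j) := by
        intro k
        rw [entS j k, div_mul_eq_mul_div, div_mul_eq_mul_div, div_div,
          div_eq_div_iff (mul_ne_zero two_ne_zero (mul_ne_zero (hu0 j) (hu0 k)))
            (mul_ne_zero (hu0 k) h2u)]
        ring
      rw [Finset.sum_congr rfl (fun k _ => hterm k), ← Finset.sum_div, hxc j,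
        div_eq_iff h2u] at hj
      have hsplit : ∑ k, (x k / u k) * ((ρ * (A k * A j)).trace + (ρ * (A j * A k)).trace)
          = (ρ * ((∑ k, (x k / u k) • A k) * A j)).trace
            + (ρ * (A j * ∑ k, (x k / u k) • A k)).trace := by
        rw [← sumTraceGen' ρ (A j) A (fun k => x k / u k),
          ← sumTraceGen ρ (A j) A (fun k => x k / u k), ← Finset.sum_add_distrib]
        exact Finset.sum_congr rfl fun k _ => by ring
      rw [hsplit] at hj
      rw [hj, show x j / u j * u j * (2 * u j) = 2 * (x j / u j * (u j * u j)) from by ring,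
        huu j, ← hptr j]
    have hcc := const_of_traceS hρ hpsd hsum hprec (fun k => x k / u k) hec
    refine ⟨x j0 / u j0, funext fun j => ?_⟩
    have h' : x j / u j = x j0 / u j0 := hcc j j0
    rw [Pi.smul_apply, smul_eq_mul, hxc j, h']
  exact ⟨eigMul_one_eq_one _ u hune hGuS hkerS,
    eigMul_one_eq_one _ u hune hGuL hkerL,
    eigMul_one_eq_one _ u hune hGuR hkerR⟩
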